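/- (Noether conservation of momentum.) Let S be a skew-symmetric 3×3 real matrix, U: ℝ³ → ℝ and A: ℝ³ → ℝ³ continuously differentiable, and assume the invariance conditions U(e^{τS}x) = U(x) and e^{−τS}A(e^{τS}x) = A(x) for all τ ∈ ℝ and all x ∈ ℝ³. Let x: [0,T] → ℝ³ be a twice differentiable solution of ẍ(t) = ẋ(t) × B(x(t)) − ∇U(x(t)) with B = ∇×A. Then the momentum M(x(t), ẋ(t)) = (ẋ(t) + A(x(t)))ᵀ S x(t) is constant on [0,T]. -/

import Mathlib

noncomputable section

open scoped RealInnerProductSpace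

/-- ℝ³ as a Euclidean space. -/
abbrev E3 : Type := EuclideanSpace ℝ (Fin 3)

/-- Cross product on ℝ³. -/
def cross3 (a b : E3) : E3 :=
  (EuclideanSpace.equiv (Fin 3) ℝ).symm
    ![a 1 * b 2 - a 2 * b 1, a 2 * b 0 - a 0 * b 2, a 0 * b 1 - a 1 * b 0]

/-- curl of a vector field on ℝ³ (0-indexed). -/
def curl3 (A : E3 → E3) (x : E3) : E3 :=
  (EuclideanSpace.equiv (Fin 3) ℝ).symm
    ![fderiv ℝ A x (EuclideanSpace.single 1 1) 2 - fderiv ℝ A x (EuclideanSpace.single 2 1) 1,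
      fderiv ℝ A x (EuclideanSpace.single 2 1) 0 - fderiv ℝ A x (EuclideanSpace.single 0 1) 2,
      fderiv ℝ A x (EuclideanSpace.single 0 1) 1 - fderiv ℝ A x (EuclideanSpace.single 1 1) 0]

namespace Stmt13Aux

open NormedSpace

lemma expZeroSmul (S : E3 →L[ℝ] E3) : exp ((0:ℝ) • S) = 1 := by
  have : (0:ℝ) • S = 0 := zero_smul ℝ S
  rw [this]; exact NormedSpace.exp_zero

lemma flowDeriv (S : E3 →L[ℝ] E3) (y : E3) :
    HasDerivAt (fun τ : ℝ => exp (τ • S) y) (S y) 0 := by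
  have h1 : HasDerivAt (fun τ : ℝ => exp (τ • S)) (exp ((0:ℝ) • S) * S) 0 :=
    hasDerivAt_exp_smul_const S 0
  rw [expZeroSmul, one_mul] at h1
  simpa using h1.clm_apply (hasDerivAt_const 0 y)

lemma exp0apply (S : E3 →L[ℝ] E3) (y : E3) : exp ((0:ℝ) • S) y = y := by
  rw [expZeroSmul]; rfl

lemma gradOrth (S : E3 →L[ℝ] E3) (U : E3 → ℝ) (hU : ContDiff ℝ 1 U)
    (hUinv : ∀ τ : ℝ, ∀ y : E3, U (exp (τ • S) y) = U y) (y : E3) :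
    fderiv ℝ U y (S y) = 0 := by
  have hUd : HasFDerivAt U (fderiv ℝ U y) ((fun τ : ℝ => exp (τ • S) y) 0) := by
    simp only [exp0apply]
    exact ((hU.differentiable one_ne_zero) y).hasFDerivAt
  have hc : HasDerivAt (fun τ : ℝ => U (exp (τ • S) y)) (fderiv ℝ U y (S y)) 0 :=
    hUd.comp_hasDerivAt 0 (flowDeriv S y)
  have hc' : HasDerivAt (fun _ : ℝ => U y) (fderiv ℝ U y (S y)) 0 := by
    apply hc.congr_of_eventuallyEq
    filter_upwards with τ using (hUinv τ y).symm
  exact hc'.unique (hasDerivAt_const 0 (U y))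

lemma Aequiv (S : E3 →L[ℝ] E3) (A : E3 → E3) (hA : ContDiff ℝ 1 A)
    (hAinv : ∀ τ : ℝ, ∀ y : E3, exp ((-τ) • S) (A (exp (τ • S) y)) = A y) (y : E3) :
    fderiv ℝ A y (S y) = S (A y) := by
  have hAd : HasFDerivAt A (fderiv ℝ A y) ((fun τ : ℝ => exp (τ • S) y) 0) := by
    simp only [exp0apply]
    exact ((hA.differentiable one_ne_zero) y).hasFDerivAt
  have hg2 : HasDerivAt (fun τ : ℝ => A (exp (τ • S) y)) (fderiv ℝ A y (S y)) 0 :=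
    hAd.comp_hasDerivAt 0 (flowDeriv S y)
  have hg1 : HasDerivAt (fun τ : ℝ => exp ((-τ) • S)) (-S) 0 := by
    have h1 : HasDerivAt (fun τ : ℝ => exp (τ • (-S))) (exp ((0:ℝ) • (-S)) * (-S)) 0 :=
      hasDerivAt_exp_smul_const (-S) 0
    have he : (fun τ : ℝ => exp (τ • (-S))) = fun τ : ℝ => exp ((-τ) • S) := by
      funext τ; rw [smul_neg, ← neg_smul]
    rw [he, expZeroSmul, one_mul] at h1
    exact h1
  have hc := hg1.clm_apply hg2
  have hc' : HasDerivAt (fun _ : ℝ => A y)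
      ((-S) (A (exp ((0:ℝ) • S) y)) + exp ((-(0:ℝ)) • S) (fderiv ℝ A y (S y))) 0 := by
    apply hc.congr_of_eventuallyEq
    filter_upwards with τ using (hAinv τ y).symm
  have h0 := hc'.unique (hasDerivAt_const 0 (A y))
  rw [exp0apply, neg_zero, exp0apply] at h0
  rw [ContinuousLinearMap.neg_apply] at h0
  exact ((neg_add_eq_zero (a := S (A y))).mp h0).symm

lemma clmDecomp (L : E3 →L[ℝ] E3) (u : E3) :
    L u = u 0 • L (EuclideanSpace.single 0 1) + u 1 • L (EuclideanSpace.single 1 1)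
      + u 2 • L (EuclideanSpace.single 2 1) := by
  have h : u = u 0 • EuclideanSpace.single 0 1 + u 1 • EuclideanSpace.single 1 1
      + u 2 • EuclideanSpace.single 2 1 := by
    ext i
    fin_cases i <;> simp [EuclideanSpace.single_apply]
  conv_lhs => rw [h]
  simp

lemma innerE3 (a b : E3) : ⟪a, b⟫ = a 0 * b 0 + a 1 * b 1 + a 2 * b 2 := by
  simp [PiLp.inner_apply, Fin.sum_univ_three]; ring

lemma equivSymmApply (f : Fin 3 → ℝ) (i : Fin 3) :
    (EuclideanSpace.equiv (Fin 3) ℝ).symm f i = f i := rfl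

lemma crossId (A : E3 → E3) (y v w : E3) :
    ⟪cross3 v (curl3 A y), w⟫ = ⟪fderiv ℝ A y w, v⟫ - ⟪fderiv ℝ A y v, w⟫ := by
  rw [innerE3, innerE3, innerE3, clmDecomp (fderiv ℝ A y) w, clmDecomp (fderiv ℝ A y) v]
  simp only [cross3, curl3, PiLp.add_apply, PiLp.smul_apply, smul_eq_mul, equivSymmApply,
    Matrix.cons_val_zero, Matrix.cons_val_one, Matrix.head_cons, Matrix.cons_val_two,
    Matrix.tail_cons]
  ring

lemma gradInner (U : E3 → ℝ) (y w : E3) : ⟪gradient U y, w⟫ = fderiv ℝ U y w := by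
  simp [gradient, InnerProductSpace.toDual_symm_apply]

end Stmt13Aux

/-- Noether conservation of momentum.  Let `S` be skew-symmetric,
`U`, `A` be `C¹` with `U(e^{τS}x) = U(x)` and `e^{−τS}A(e^{τS}x) = A(x)` for all `τ, x`.
If `x` is a twice differentiable solution of `ẍ = ẋ × (∇×A)(x) − ∇U(x)` on `[0,T]`,
then the momentum `M(x,ẋ) = (ẋ + A(x))ᵀ S x` is constant on `[0,T]`. -/
theorem stmt13
    (T : ℝ) (hT : 0 < T)
    (S : E3 →L[ℝ] E3) (hSskew : ∀ a b : E3, ⟪S a, b⟫ = -⟪a, S b⟫)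
    (U : E3 → ℝ) (hU : ContDiff ℝ 1 U)
    (A : E3 → E3) (hA : ContDiff ℝ 1 A)
    (hUinv : ∀ τ : ℝ, ∀ y : E3, U (NormedSpace.exp (τ • S) y) = U y)
    (hAinv : ∀ τ : ℝ, ∀ y : E3,
      NormedSpace.exp ((-τ) • S) (A (NormedSpace.exp (τ • S) y)) = A y)
    (x : ℝ → E3)
    (hx1 : Differentiable ℝ x) (hx2 : Differentiable ℝ (deriv x))
    (hode : ∀ t ∈ Set.Icc (0:ℝ) T,
      deriv (deriv x) t = cross3 (deriv x t) (curl3 A (x t)) - gradient U (x t)) :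
    ∀ t ∈ Set.Icc (0:ℝ) T,
      ⟪deriv x t + A (x t), S (x t)⟫ = ⟪deriv x 0 + A (x 0), S (x 0)⟫ := by
  classical
  set f : ℝ → ℝ := fun t => ⟪deriv x t + A (x t), S (x t)⟫ with hf
  have hderiv0 : ∀ t ∈ Set.Icc (0:ℝ) T, HasDerivAt f 0 t := by
    intro t ht
    have hxd : HasDerivAt x (deriv x t) t := (hx1 t).hasDerivAt
    have hvd : HasDerivAt (deriv x) (deriv (deriv x) t) t := (hx2 t).hasDerivAt
    have hAc : HasDerivAt (fun s => A (x s)) (fderiv ℝ A (x t) (deriv x t)) t :=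
      ((hA.differentiable one_ne_zero) (x t)).hasFDerivAt.comp_hasDerivAt t hxd
    have hSc : HasDerivAt (fun s => S (x s)) (S (deriv x t)) t :=
      S.hasFDerivAt.comp_hasDerivAt t hxd
    have hleft : HasDerivAt (fun s => deriv x s + A (x s))
        (deriv (deriv x) t + fderiv ℝ A (x t) (deriv x t)) t := hvd.add hAc
    have hfd : HasDerivAt f
        (⟪deriv x t + A (x t), S (deriv x t)⟫
          + ⟪deriv (deriv x) t + fderiv ℝ A (x t) (deriv x t), S (x t)⟫) t :=
      hleft.inner ℝ hSc
    have hzero : (⟪deriv x t + A (x t), S (deriv x t)⟫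
        + ⟪deriv (deriv x) t + fderiv ℝ A (x t) (deriv x t), S (x t)⟫) = 0 := by
      rw [hode t ht, inner_add_left, inner_add_left, inner_sub_left,
        Stmt13Aux.crossId A (x t) (deriv x t) (S (x t)),
        Stmt13Aux.Aequiv S A hA hAinv (x t)]
      have hg : ⟪gradient U (x t), S (x t)⟫ = 0 := by
        rw [Stmt13Aux.gradInner]
        exact Stmt13Aux.gradOrth S U hU hUinv (x t)
      have hskew1 : ⟪deriv x t, S (deriv x t)⟫ = 0 := by
        have h1 := hSskew (deriv x t) (deriv x t)
        have h2 := real_inner_comm (S (deriv x t)) (deriv x t)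
        linarith
      have hskew2 : ⟪S (A (x t)), deriv x t⟫ = -⟪A (x t), S (deriv x t)⟫ :=
        hSskew (A (x t)) (deriv x t)
      rw [hg, hskew1, hskew2]
      ring
    rw [hzero] at hfd
    exact hfd
  have hcf : Continuous f := by
    have h1 : Continuous fun t => deriv x t + A (x t) :=
      hx2.continuous.add (hA.continuous.comp hx1.continuous)
    have h2 : Continuous fun t => S (x t) := S.continuous.comp hx1.continuous
    exact h1.inner h2
  intro t ht
  exact constant_of_has_deriv_right_zero hcf.continuousOn
    (fun s hs => (hderiv0 s (Set.Ico_subset_Icc_self hs)).hasDerivWithinAt) t ht
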